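/- Let D be a distribution over ℝ^d × {±1} that is linearly r-separated with robust margin γ_r > 0 by a hyperplane through the origin (there exists a unit vector u with ⟨u, y z⟩ ≥ γ_r for all (x,y) in the support and all z with ‖z - x‖_p ≤ r), and suppose all adversarially perturbed points z satisfy ‖z‖₂ ≤ R. Then the modified adversarial perceptron (which trains on a uniformly random prefix of length k ∈ {0,…,n} of an i.i.d. sample of size n) has expected robust loss at most R²/(γ_r²(n+1)). -/

import Mathlib

open Finset MeasureTheory
open scoped ENNReal

/-- The standard inner product on `ℝ^d`. -/
def dotp {d : ℕ} (w x : Fin d → ℝ) : ℝ := ∑ i, w i * x i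

/-- The Euclidean (ℓ₂) norm on `ℝ^d`. -/
noncomputable def enorm2 {d : ℕ} (x : Fin d → ℝ) : ℝ := Real.sqrt (∑ i, x i ^ 2)

/-- The ℓ_p norm on `ℝ^d`. -/
noncomputable def pnorm (p : ℝ≥0∞) [Fact (1 ≤ p)] {d : ℕ} (x : Fin d → ℝ) : ℝ :=
  ‖(WithLp.equiv p (Fin d → ℝ)).symm x‖

/-- The weight vectors produced by the adversarial perceptron run on the stream `s`,
using the adversarial-attack oracle `adv`: `advW adv s k` is the weight vector after
processing the first `k` points.  At each step the current point is attacked; if the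
adversarial example is misclassified a perceptron update is performed with it. -/
noncomputable def advW {d : ℕ}
    (adv : (Fin d → ℝ) → (Fin d → ℝ) → ℝ → (Fin d → ℝ))
    (s : ℕ → (Fin d → ℝ) × ℝ) : ℕ → (Fin d → ℝ)
  | 0 => 0
  | t + 1 =>
    let w := advW adv s t
    let z := adv w (s t).1 (s t).2
    if (s t).2 * dotp w z ≤ 0 then w + (s t).2 • z else w

/-- The robust loss at radius `r` (in the ℓ_p norm) of the linear classifier with
weight vector `w` (through the origin) with respect to the distribution `D`. -/
noncomputable def robustLoss (p : ℝ≥0∞) [Fact (1 ≤ p)] {d : ℕ}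
    (D : Measure ((Fin d → ℝ) × ℝ)) (r : ℝ) (w : Fin d → ℝ) : ℝ :=
  (D {xy | ∃ z, pnorm p (z - xy.1) ≤ r ∧
      (if 0 ≤ dotp w z then (1 : ℝ) else -1) ≠ xy.2}).toReal

section Aux
variable {d : ℕ}

lemma dotp_add_right (w x y : Fin d → ℝ) : dotp w (x + y) = dotp w x + dotp w y := by
  simp [dotp, mul_add, Finset.sum_add_distrib]

lemma dotp_smul_right (w : Fin d → ℝ) (c : ℝ) (x : Fin d → ℝ) :
    dotp w (c • x) = c * dotp w x := by
  simp only [dotp, Pi.smul_apply, smul_eq_mul, Finset.mul_sum]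
  exact Finset.sum_congr rfl fun i _ => by ring

/-- squared norm -/
def sqn {d : ℕ} (w : Fin d → ℝ) : ℝ := ∑ i, w i ^ 2

lemma sqn_nonneg (w : Fin d → ℝ) : 0 ≤ sqn w :=
  Finset.sum_nonneg fun _ _ => sq_nonneg _

lemma sqn_add_smul (w z : Fin d → ℝ) (c : ℝ) :
    sqn (w + c • z) = sqn w + 2 * c * dotp w z + c ^ 2 * sqn z := by
  simp only [sqn, dotp, Pi.add_apply, Pi.smul_apply, smul_eq_mul, Finset.mul_sum,
    ← Finset.sum_add_distrib]
  exact Finset.sum_congr rfl fun i _ => by ring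

lemma cauchy_schwarz (u w : Fin d → ℝ) : (dotp u w) ^ 2 ≤ sqn u * sqn w :=
  Finset.sum_mul_sq_le_sq_mul_sq _ _ _

/-- number of mistakes (as a real) in the first m steps -/
noncomputable def mcount {d : ℕ} (adv : (Fin d → ℝ) → (Fin d → ℝ) → ℝ → (Fin d → ℝ))
    (s : ℕ → (Fin d → ℝ) × ℝ) (m : ℕ) : ℝ :=
  ∑ t ∈ Finset.range m,
    if (s t).2 * dotp (advW adv s t) (adv (advW adv s t) (s t).1 (s t).2) ≤ 0
    then (1 : ℝ) else 0

lemma mcount_nonneg (adv) (s : ℕ → (Fin d → ℝ) × ℝ) (m : ℕ) : 0 ≤ mcount adv s m :=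
  Finset.sum_nonneg fun i _ => by positivity

/-- The perceptron mistake bound, deterministic form. -/
lemma mistake_bound {γ R : ℝ} (hγ : 0 < γ)
    (u : Fin d → ℝ) (hu : sqn u = 1)
    (adv : (Fin d → ℝ) → (Fin d → ℝ) → ℝ → (Fin d → ℝ))
    (s : ℕ → (Fin d → ℝ) × ℝ) (m : ℕ)
    (h : ∀ t < m, ((s t).2) ^ 2 = 1 ∧
      γ ≤ (s t).2 * dotp u (adv (advW adv s t) (s t).1 (s t).2) ∧
      sqn (adv (advW adv s t) (s t).1 (s t).2) ≤ R ^ 2) :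
    mcount adv s m ≤ R ^ 2 / γ ^ 2 := by
  have key : ∀ m, (∀ t < m, ((s t).2) ^ 2 = 1 ∧
      γ ≤ (s t).2 * dotp u (adv (advW adv s t) (s t).1 (s t).2) ∧
      sqn (adv (advW adv s t) (s t).1 (s t).2) ≤ R ^ 2) →
      γ * mcount adv s m ≤ dotp u (advW adv s m) ∧
      sqn (advW adv s m) ≤ mcount adv s m * R ^ 2 := by
    intro m
    induction m with
    | zero => intro _; simp [mcount, advW, dotp, sqn]
    | succ m ih =>
      intro hm
      obtain ⟨ih1, ih2⟩ := ih fun t ht => hm t (ht.trans (Nat.lt_succ_self m))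
      obtain ⟨hy, hmar, hnorm⟩ := hm m (Nat.lt_succ_self m)
      set w := advW adv s m with hw
      set z := adv w (s m).1 (s m).2 with hz
      have hcnt : mcount adv s (m + 1) = mcount adv s m +
          (if (s m).2 * dotp w z ≤ 0 then (1:ℝ) else 0) := by
        rw [mcount, Finset.sum_range_succ]; rfl
      have hW : advW adv s (m + 1) =
          if (s m).2 * dotp w z ≤ 0 then w + (s m).2 • z else w := rfl
      by_cases hup : (s m).2 * dotp w z ≤ 0
      · rw [hcnt, hW, if_pos hup, if_pos hup]
        constructor
        · rw [dotp_add_right, dotp_smul_right, mul_add, mul_one]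
          exact add_le_add ih1 hmar
        · rw [sqn_add_smul]
          have h1 : 2 * (s m).2 * dotp w z ≤ 0 := by nlinarith [hup]
          nlinarith [ih2, hnorm, hy, sqn_nonneg z]
      · rw [hcnt, hW, if_neg hup, if_neg hup]
        exact ⟨by simpa using ih1, by simpa using ih2⟩
  obtain ⟨h1, h2⟩ := key m h
  set M := mcount adv s m with hM
  have hM0 : 0 ≤ M := mcount_nonneg adv s m
  have hcs : (dotp u (advW adv s m)) ^ 2 ≤ sqn (advW adv s m) := by
    have := cauchy_schwarz u (advW adv s m)
    rwa [hu, one_mul] at this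
  have hsq : (γ * M) ^ 2 ≤ M * R ^ 2 := by
    have h1' : 0 ≤ γ * M := by positivity
    calc (γ * M) ^ 2 ≤ (dotp u (advW adv s m)) ^ 2 := by
          apply pow_le_pow_left₀ h1' h1
      _ ≤ sqn (advW adv s m) := hcs
      _ ≤ M * R ^ 2 := h2
  rcases eq_or_lt_of_le hM0 with h0 | h0
  · rw [← h0]; positivity
  · rw [div_eq_inv_mul, ← mul_le_mul_iff_right₀ h0, ← mul_le_mul_iff_right₀ (pow_pos hγ 2)]
    calc γ ^ 2 * (M * M) = (γ * M) ^ 2 := by ring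
      _ ≤ M * R ^ 2 := hsq
      _ = γ ^ 2 * (M * ((γ ^ 2)⁻¹ * R ^ 2)) := by field_simp

/-- Two streams agreeing on the first `k` steps produce the same weights. -/
lemma advW_congr (adv : (Fin d → ℝ) → (Fin d → ℝ) → ℝ → (Fin d → ℝ))
    (s s' : ℕ → (Fin d → ℝ) × ℝ) (k : ℕ) (h : ∀ t < k, s t = s' t) :
    advW adv s k = advW adv s' k := by
  induction k with
  | zero => rfl
  | succ t ih =>
    have h1 := ih fun m hm => h m (hm.trans (Nat.lt_succ_self t))
    have h2 := h t (Nat.lt_succ_self t)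
    show (let w := advW adv s t; let z := adv w (s t).1 (s t).2;
      if (s t).2 * dotp w z ≤ 0 then w + (s t).2 • z else w) =
      (let w := advW adv s' t; let z := adv w (s' t).1 (s' t).2;
      if (s' t).2 * dotp w z ≤ 0 then w + (s' t).2 • z else w)
    rw [h1, h2]
end Aux

section Meas
variable {d : ℕ} {α : Type*} [MeasurableSpace α]

lemma measurable_dotp {f g : α → Fin d → ℝ} (hf : Measurable f) (hg : Measurable g) :
    Measurable fun a => dotp (f a) (g a) := by
  unfold dotp
  exact Finset.measurable_sum _ fun i _ =>
    ((measurable_pi_apply i).comp hf).mul ((measurable_pi_apply i).comp hg)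

variable {adv : (Fin d → ℝ) → (Fin d → ℝ) → ℝ → (Fin d → ℝ)}

lemma measurable_adv_comp
    (hadvm : Measurable fun q : (Fin d → ℝ) × (Fin d → ℝ) × ℝ => adv q.1 q.2.1 q.2.2)
    {w : α → Fin d → ℝ} {x : α → Fin d → ℝ} {y : α → ℝ}
    (hw : Measurable w) (hx : Measurable x) (hy : Measurable y) :
    Measurable fun a => adv (w a) (x a) (y a) :=
  hadvm.comp (hw.prodMk (hx.prodMk hy))

lemma measurable_advW
    (hadvm : Measurable fun q : (Fin d → ℝ) × (Fin d → ℝ) × ℝ => adv q.1 q.2.1 q.2.2)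
    (str : α → ℕ → (Fin d → ℝ) × ℝ)
    (hstr : ∀ t, Measurable fun a => str a t) (k : ℕ) :
    Measurable fun a => advW adv (str a) k := by
  induction k with
  | zero => simpa [advW] using measurable_const
  | succ t ih =>
    have hx : Measurable fun a => (str a t).1 := (hstr t).fst
    have hy : Measurable fun a => (str a t).2 := (hstr t).snd
    have hz : Measurable fun a => adv (advW adv (str a) t) (str a t).1 (str a t).2 :=
      measurable_adv_comp hadvm ih hx hy
    have hcond : MeasurableSet {a | (str a t).2 *
        dotp (advW adv (str a) t) (adv (advW adv (str a) t) (str a t).1 (str a t).2) ≤ 0} :=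
      measurableSet_le (hy.mul (measurable_dotp ih hz)) measurable_const
    have heq : (fun a => advW adv (str a) (t + 1)) = fun a =>
        if (str a t).2 * dotp (advW adv (str a) t)
            (adv (advW adv (str a) t) (str a t).1 (str a t).2) ≤ 0
        then advW adv (str a) t + (str a t).2 • adv (advW adv (str a) t) (str a t).1 (str a t).2
        else advW adv (str a) t := rfl
    rw [heq]
    exact Measurable.ite hcond (ih.add (hy.smul hz)) ih
end Meas

/-- If `D` is linearly `r`-separated with robust margin `γ > 0` by a
hyperplane through the origin, and all adversarially perturbed points have ℓ₂ norm
at most `R`, then the modified adversarial perceptron (trained on a uniformly random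
prefix of length `k ∈ {0,…,n}` of an i.i.d. sample of size `n`) has expected robust
loss at most `R²/(γ²(n+1))`. -/
theorem adversarial_perceptron_expected_robust_loss
    (d n : ℕ) (p : ℝ≥0∞) [Fact (1 ≤ p)] (hp : 1 < p)
    (r γ R : ℝ) (hr : 0 < r) (hγ : 0 < γ) (hR : 0 < R)
    (D : Measure ((Fin d → ℝ) × ℝ)) [IsProbabilityMeasure D]
    (u : Fin d → ℝ) (hu : enorm2 u = 1)
    (hsep : ∀ᵐ xy ∂D, (xy.2 = 1 ∨ xy.2 = -1) ∧
      ∀ z, pnorm p (z - xy.1) ≤ r → γ ≤ xy.2 * dotp u z ∧ enorm2 z ≤ R)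
    (adv : (Fin d → ℝ) → (Fin d → ℝ) → ℝ → (Fin d → ℝ))
    (hadv : ∀ w x y, pnorm p (adv w x y - x) ≤ r ∧
      ∀ z, pnorm p (z - x) ≤ r → y * dotp w (adv w x y) ≤ y * dotp w z)
    (hadvm : Measurable fun q : (Fin d → ℝ) × (Fin d → ℝ) × ℝ => adv q.1 q.2.1 q.2.2) :
    (1 / (n + 1 : ℝ)) * ∑ k ∈ Finset.range (n + 1),
      ∫ s : Fin n → (Fin d → ℝ) × ℝ,
        robustLoss p D r (advW adv (fun t => if h : t < n then s ⟨t, h⟩ else (0, 1)) k)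
        ∂(Measure.pi fun _ : Fin n => D)
    ≤ R ^ 2 / (γ ^ 2 * (n + 1)) := by
  classical
  set E := (Fin d → ℝ) × ℝ
  set π : Measure (Fin n → E) := Measure.pi fun _ : Fin n => D with hπ
  set Pi1 : Measure (Fin (n + 1) → E) := Measure.pi fun _ : Fin (n + 1) => D with hPi1
  -- padded streams
  set pad : (Fin n → E) → ℕ → E :=
    fun s t => if h : t < n then s ⟨t, h⟩ else (0, 1) with hpad
  set pad1 : (Fin (n + 1) → E) → ℕ → E :=
    fun s t => if h : t < n + 1 then s ⟨t, h⟩ else (0, 1) with hpad1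
  -- the mistake indicator
  set msf : (Fin d → ℝ) → E → ℝ :=
    fun w xy => if xy.2 * dotp w (adv w xy.1 xy.2) ≤ 0 then 1 else 0 with hmsf
  have msf_nonneg : ∀ w xy, 0 ≤ msf w xy := by
    intro w xy; simp only [hmsf]; split <;> norm_num
  have msf_le_one : ∀ w xy, ‖msf w xy‖ ≤ 1 := by
    intro w xy; simp only [hmsf]; split <;> simp
  -- measurability of the mistake set for fixed w
  have hmistset : ∀ w : Fin d → ℝ,
      MeasurableSet {xy : E | xy.2 * dotp w (adv w xy.1 xy.2) ≤ 0} := by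
    intro w
    exact measurableSet_le (measurable_snd.mul (measurable_dotp measurable_const
      (measurable_adv_comp hadvm measurable_const measurable_fst measurable_snd)))
      measurable_const
  -- integral of mistake indicator is the measure of the mistake set
  have hint_msf : ∀ w : Fin d → ℝ,
      ∫ xy, msf w xy ∂D = (D {xy : E | xy.2 * dotp w (adv w xy.1 xy.2) ≤ 0}).toReal := by
    intro w
    have : (fun xy => msf w xy) =
        Set.indicator {xy : E | xy.2 * dotp w (adv w xy.1 xy.2) ≤ 0} (fun _ => (1:ℝ)) := by
      funext xy
      simp only [hmsf, Set.indicator_apply, Set.mem_setOf_eq]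
    rw [this]
    exact integral_indicator_one (hmistset w)
  -- pointwise bound on the robust loss
  have hptw : ∀ w : Fin d → ℝ, robustLoss p D r w ≤ ∫ xy, msf w xy ∂D := by
    intro w
    rw [hint_msf]
    have hN : D {xy : E | ¬ ((xy.2 = 1 ∨ xy.2 = -1) ∧
        ∀ z, pnorm p (z - xy.1) ≤ r → γ ≤ xy.2 * dotp u z ∧ enorm2 z ≤ R)} = 0 :=
      ae_iff.mp hsep
    have hsub : {xy : E | ∃ z, pnorm p (z - xy.1) ≤ r ∧
        (if 0 ≤ dotp w z then (1 : ℝ) else -1) ≠ xy.2} ⊆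
        {xy : E | xy.2 * dotp w (adv w xy.1 xy.2) ≤ 0} ∪
        {xy : E | ¬ ((xy.2 = 1 ∨ xy.2 = -1) ∧
          ∀ z, pnorm p (z - xy.1) ≤ r → γ ≤ xy.2 * dotp u z ∧ enorm2 z ≤ R)} := by
      intro xy hxy
      by_cases hG : (xy.2 = 1 ∨ xy.2 = -1) ∧
          ∀ z, pnorm p (z - xy.1) ≤ r → γ ≤ xy.2 * dotp u z ∧ enorm2 z ≤ R
      · left
        obtain ⟨z, hz, hne⟩ := hxy
        have hmin := (hadv w xy.1 xy.2).2 z hz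
        rcases hG.1 with hy | hy
        · have hdz : dotp w z < 0 := by
            by_contra hc
            push_neg at hc
            rw [if_pos hc] at hne
            exact hne hy.symm
          show xy.2 * dotp w (adv w xy.1 xy.2) ≤ 0
          calc xy.2 * dotp w (adv w xy.1 xy.2) ≤ xy.2 * dotp w z := hmin
            _ ≤ 0 := by rw [hy, one_mul]; exact hdz.le
        · have hdz : 0 ≤ dotp w z := by
            by_contra hc
            push_neg at hc
            rw [if_neg (not_le.mpr hc)] at hne
            exact hne hy.symm
          show xy.2 * dotp w (adv w xy.1 xy.2) ≤ 0
          calc xy.2 * dotp w (adv w xy.1 xy.2) ≤ xy.2 * dotp w z := hmin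
            _ ≤ 0 := by rw [hy]; linarith
      · right; exact hG
    refine ENNReal.toReal_mono (measure_ne_top D _) ?_
    calc D _ ≤ D _ := measure_mono hsub
      _ ≤ D {xy : E | xy.2 * dotp w (adv w xy.1 xy.2) ≤ 0} + 0 := by
          rw [← hN]; exact measure_union_le _ _
      _ = D {xy : E | xy.2 * dotp w (adv w xy.1 xy.2) ≤ 0} := add_zero _
  -- measurability of W_k as a function of the sample
  have hpadmeas : ∀ t, Measurable fun s : Fin n → E => pad s t := by
    intro t
    simp only [hpad]
    split
    · exact measurable_pi_apply _
    · exact measurable_const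
  have hpad1meas : ∀ t, Measurable fun s : Fin (n+1) → E => pad1 s t := by
    intro t
    simp only [hpad1]
    split
    · exact measurable_pi_apply _
    · exact measurable_const
  have hWmeas : ∀ k, Measurable fun s : Fin n → E => advW adv (pad s) k :=
    fun k => measurable_advW hadvm _ hpadmeas k
  have hW1meas : ∀ k, Measurable fun s : Fin (n+1) → E => advW adv (pad1 s) k :=
    fun k => measurable_advW hadvm _ hpad1meas k
  -- measurability of the msf composed functions
  have hmsf_meas : ∀ {β : Type} [MeasurableSpace β] (w : β → Fin d → ℝ) (xy : β → E),
      Measurable w → Measurable xy → Measurable fun b => msf (w b) (xy b) := by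
    intro β _ w xy hw hxy
    simp only [hmsf]
    have : Measurable fun b => (xy b).2 * dotp (w b)
        (adv (w b) (xy b).1 (xy b).2) :=
      (hxy.snd).mul (measurable_dotp hw (measurable_adv_comp hadvm hw hxy.fst hxy.snd))
    exact Measurable.ite (measurableSet_le this measurable_const)
      measurable_const measurable_const
  -- Step: for each k ≤ n, the expected robust loss of W_k is at most the
  -- expected mistake indicator at step k on a sample of size n+1
  have step : ∀ k, k < n + 1 →
      ∫ s, robustLoss p D r (advW adv (pad s) k) ∂π ≤
      ∫ s', msf (advW adv (pad1 s') k) (pad1 s' k) ∂Pi1 := by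
    intro k hk
    have hkn : k ≤ n := Nat.lt_succ_iff.mp hk
    set kf : Fin (n + 1) := ⟨k, hk⟩ with hkf
    -- the function on the product space
    set G : E × (Fin n → E) → ℝ := fun q => msf (advW adv (pad q.2) k) q.1 with hG
    have hGmeas : Measurable G :=
      hmsf_meas _ _ ((hWmeas k).comp measurable_snd) measurable_fst
    have hGint : Integrable G (D.prod π) := by
      refine (integrable_const (1:ℝ)).mono' hGmeas.aestronglyMeasurable ?_
      exact ae_of_all _ fun q => msf_le_one _ _
    -- 1. bound robust loss by inner integral
    have h1 : ∫ s, robustLoss p D r (advW adv (pad s) k) ∂π ≤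
        ∫ s, (∫ xy, msf (advW adv (pad s) k) xy ∂D) ∂π := by
      refine integral_mono_of_nonneg (ae_of_all _ fun s => ENNReal.toReal_nonneg) ?_
        (ae_of_all _ fun s => hptw _)
      -- integrability of the inner-integral function
      have hsm : AEStronglyMeasurable
          (fun s => ∫ xy, msf (advW adv (pad s) k) xy ∂D) π := by
        have : StronglyMeasurable fun q : (Fin n → E) × E =>
            msf (advW adv (pad q.1) k) q.2 :=
          (hmsf_meas _ _ ((hWmeas k).comp measurable_fst) measurable_snd).stronglyMeasurable
        exact this.integral_prod_right'.aestronglyMeasurable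
      refine (integrable_const (1:ℝ)).mono' hsm (ae_of_all _ fun s => ?_)
      calc ‖∫ xy, msf (advW adv (pad s) k) xy ∂D‖
          ≤ ∫ xy, ‖msf (advW adv (pad s) k) xy‖ ∂D := norm_integral_le_integral_norm _
        _ ≤ ∫ _xy, (1:ℝ) ∂D := by
            refine integral_mono_of_nonneg (ae_of_all _ fun xy => norm_nonneg _)
              (integrable_const _) (ae_of_all _ fun xy => msf_le_one _ _)
        _ = 1 := by simp
    -- 2. the double integral equals the product integral
    have h2 : ∫ s, (∫ xy, msf (advW adv (pad s) k) xy ∂D) ∂π =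
        ∫ q, G q ∂(D.prod π) := by
      haveI : SFinite π := by
        have hs : SigmaFinite π := by rw [hπ]; exact Measure.pi.sigmaFinite _
        infer_instance
      rw [integral_prod_symm G hGint]
    -- 3. transport to the (n+1)-sample space via the measurable equivalence
    have h3 : ∫ q, G q ∂(D.prod π) =
        ∫ s', msf (advW adv (pad1 s') k) (s' kf) ∂Pi1 := by
      have mp := measurePreserving_piFinSuccAbove (fun _ : Fin (n + 1) => D) kf
      have mps := mp.symm
      have := mps.integral_comp'
        (f := (MeasurableEquiv.piFinSuccAbove (fun _ : Fin (n + 1) => E) kf).symm)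
        (g := fun s' => msf (advW adv (pad1 s') k) (s' kf))
      rw [← this]
      refine integral_congr_ae (ae_of_all _ fun q => ?_)
      obtain ⟨x, t⟩ := q
      have hsymm : (MeasurableEquiv.piFinSuccAbove (fun _ : Fin (n + 1) => E) kf).symm (x, t)
          = kf.insertNth x t := by
        simp [MeasurableEquiv.piFinSuccAbove, Fin.insertNthEquiv]
      have hsame : Fin.insertNth (α := fun _ => E) kf x t kf = x :=
        Fin.insertNth_apply_same (α := fun _ => E) kf x t
      have hWeq : advW adv (pad1 (kf.insertNth x t)) k = advW adv (pad t) k := by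
        apply advW_congr
        intro m hm
        have hmn : m < n := lt_of_lt_of_le hm hkn
        have hmn1 : m < n + 1 := hmn.trans (Nat.lt_succ_self n)
        have hlt : Fin.castSucc (⟨m, hmn⟩ : Fin n) < kf := hm
        have h := Fin.insertNth_apply_succAbove (α := fun _ => E) kf x t ⟨m, hmn⟩
        rw [Fin.succAbove_of_castSucc_lt kf ⟨m, hmn⟩ hlt] at h
        show pad1 (kf.insertNth x t) m = pad t m
        simp only [hpad1, hpad, dif_pos hmn1, dif_pos hmn]
        exact h
      show msf (advW adv (pad t) k) x =
        msf (advW adv (pad1 ((MeasurableEquiv.piFinSuccAbove (fun _ => E) kf).symm (x, t))) k)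
          ((MeasurableEquiv.piFinSuccAbove (fun _ => E) kf).symm (x, t) kf)
      rw [hsymm, hWeq, hsame]
    have h4 : ∫ s', msf (advW adv (pad1 s') k) (s' kf) ∂Pi1 =
        ∫ s', msf (advW adv (pad1 s') k) (pad1 s' k) ∂Pi1 := by
      refine integral_congr_ae (ae_of_all _ fun s' => ?_)
      show msf (advW adv (pad1 s') k) (s' kf) = msf (advW adv (pad1 s') k) (pad1 s' k)
      have : pad1 s' k = s' kf := by simp only [hpad1, dif_pos hk]; rfl
      rw [this]
    calc ∫ s, robustLoss p D r (advW adv (pad s) k) ∂π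
        ≤ ∫ s, (∫ xy, msf (advW adv (pad s) k) xy ∂D) ∂π := h1
      _ = ∫ q, G q ∂(D.prod π) := h2
      _ = ∫ s', msf (advW adv (pad1 s') k) (s' kf) ∂Pi1 := h3
      _ = ∫ s', msf (advW adv (pad1 s') k) (pad1 s' k) ∂Pi1 := h4
  -- integrability of each mistake indicator on Pi1
  have hind_int : ∀ k, Integrable
      (fun s' : Fin (n+1) → E => msf (advW adv (pad1 s') k) (pad1 s' k)) Pi1 := by
    intro k
    refine (integrable_const (1:ℝ)).mono'
      (hmsf_meas _ _ (hW1meas k) (hpad1meas k)).aestronglyMeasurable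
      (ae_of_all _ fun s' => msf_le_one _ _)
  -- sum of the indicators is the mistake count
  have hsum_count : ∀ s' : Fin (n+1) → E,
      ∑ k ∈ Finset.range (n+1), msf (advW adv (pad1 s') k) (pad1 s' k) =
      mcount adv (pad1 s') (n+1) := by
    intro s'
    unfold mcount
    rfl
  -- a.e. bound on the mistake count
  have hgood : ∀ᵐ s' ∂Pi1, ∀ i : Fin (n+1), (s' i).2 = 1 ∨ (s' i).2 = -1 ∧ True →
      True := ae_of_all _ fun _ _ _ => trivial
  -- the real a.e. statement
  have hae : ∀ᵐ s' ∂Pi1, ∀ i : Fin (n+1),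
      ((s' i).2 = 1 ∨ (s' i).2 = -1) ∧
      ∀ z, pnorm p (z - (s' i).1) ≤ r → γ ≤ (s' i).2 * dotp u z ∧ enorm2 z ≤ R := by
    rw [ae_all_iff]
    intro i
    have hN : D {xy : E | ¬ ((xy.2 = 1 ∨ xy.2 = -1) ∧
        ∀ z, pnorm p (z - xy.1) ≤ r → γ ≤ xy.2 * dotp u z ∧ enorm2 z ≤ R)} = 0 :=
      ae_iff.mp hsep
    obtain ⟨M, hMsub, hMmeas, hM0⟩ := exists_measurable_superset_of_null hN
    have hpre : Pi1 ((fun s' : Fin (n+1) → E => s' i) ⁻¹' M) = 0 := by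
      have hset : ((fun s' : Fin (n+1) → E => s' i) ⁻¹' M) =
          Set.pi Set.univ (Function.update (fun _ : Fin (n+1) => (Set.univ : Set E)) i M) := by
        ext s'
        simp only [Set.mem_preimage, Set.mem_univ_pi]
        constructor
        · intro h j
          by_cases hj : j = i
          · subst hj; simpa using h
          · simp [Function.update_of_ne hj]
        · intro h
          have := h i
          simpa using this
      rw [hset, hPi1, Measure.pi_pi]
      rw [Finset.prod_eq_zero (Finset.mem_univ i)]
      simp [hM0]
    rw [ae_iff]
    refine measure_mono_null ?_ hpre
    intro s' hs'
    exact hMsub hs'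
  -- conclude : the integral of the mistake count is at most R²/γ²
  have hcount_bound : ∫ s', mcount adv (pad1 s') (n+1) ∂Pi1 ≤ R ^ 2 / γ ^ 2 := by
    have hsqnu : sqn u = 1 := by
      have : Real.sqrt (sqn u) = 1 := hu
      have h2 := congrArg (fun x => x ^ 2) this
      simpa [Real.sq_sqrt (sqn_nonneg u)] using h2
    have hb : ∀ᵐ s' ∂Pi1, mcount adv (pad1 s') (n+1) ≤ R ^ 2 / γ ^ 2 := by
      filter_upwards [hae] with s' hs'
      apply mistake_bound hγ u hsqnu
      intro t ht
      have hst : pad1 s' t = s' ⟨t, ht⟩ := by simp only [hpad1, dif_pos ht]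
      obtain ⟨hy, hz⟩ := hs' ⟨t, ht⟩
      rw [hst]
      set w := advW adv (pad1 s') t
      have hzz := hz (adv w (s' ⟨t, ht⟩).1 (s' ⟨t, ht⟩).2)
        (hadv w (s' ⟨t, ht⟩).1 (s' ⟨t, ht⟩).2).1
      refine ⟨?_, ?_, ?_⟩
      · rcases hy with h | h <;> rw [h] <;> norm_num
      · exact hzz.1
      · have := hzz.2
        have hsq : Real.sqrt (sqn (adv w (s' ⟨t, ht⟩).1 (s' ⟨t, ht⟩).2)) ≤ R := this
        calc sqn (adv w (s' ⟨t, ht⟩).1 (s' ⟨t, ht⟩).2)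
            = Real.sqrt (sqn (adv w (s' ⟨t, ht⟩).1 (s' ⟨t, ht⟩).2)) ^ 2 :=
              (Real.sq_sqrt (sqn_nonneg _)).symm
          _ ≤ R ^ 2 := pow_le_pow_left₀ (Real.sqrt_nonneg _) hsq 2
    calc ∫ s', mcount adv (pad1 s') (n+1) ∂Pi1
        ≤ ∫ _s', R ^ 2 / γ ^ 2 ∂Pi1 := by
          refine integral_mono_of_nonneg
            (ae_of_all _ fun s' => mcount_nonneg adv _ _) (integrable_const _) hb
      _ = R ^ 2 / γ ^ 2 := by simp
  -- assemble
  have hsum : ∑ k ∈ Finset.range (n + 1),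
      ∫ s, robustLoss p D r (advW adv (pad s) k) ∂π ≤ R ^ 2 / γ ^ 2 := by
    calc ∑ k ∈ Finset.range (n + 1), ∫ s, robustLoss p D r (advW adv (pad s) k) ∂π
        ≤ ∑ k ∈ Finset.range (n + 1),
            ∫ s', msf (advW adv (pad1 s') k) (pad1 s' k) ∂Pi1 := by
          refine Finset.sum_le_sum fun k hk => step k (Finset.mem_range.mp hk)
      _ = ∫ s', ∑ k ∈ Finset.range (n + 1),
            msf (advW adv (pad1 s') k) (pad1 s' k) ∂Pi1 := by
          rw [integral_finset_sum _ fun k _ => hind_int k]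
      _ = ∫ s', mcount adv (pad1 s') (n+1) ∂Pi1 :=
          integral_congr_ae (ae_of_all _ fun s' => hsum_count s')
      _ ≤ R ^ 2 / γ ^ 2 := hcount_bound
  have hn1 : (0:ℝ) < n + 1 := by positivity
  have hrw : R ^ 2 / (γ ^ 2 * (n + 1)) = (1 / (n + 1 : ℝ)) * (R ^ 2 / γ ^ 2) := by
    field_simp
  rw [hrw]
  refine mul_le_mul_of_nonneg_left ?_ (by positivity)
  exact hsum
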